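/- Let C be a triangulated category with adjacent weight structure w and t-structure t, and m ≤ n. Then the class of C[m,n]-conull morphisms (morphisms h such that Hom(h, I) = 0 for all I ∈ C[m,n]) coincides with the class of morphisms that kill weights m,...,n. -/

import Mathlib

open CategoryTheory CategoryTheory.Limits CategoryTheory.Pretriangulated Opposite

universe v u

variable (C : Type u) [Category.{v} C] [Preadditive C] [HasZeroObject C]
  [HasShift C ℤ] [∀ n : ℤ, (shiftFunctor C n).Additive] [Pretriangulated C]

/-- A weight structure on the triangulated category `C`. -/
structure WeightStructure where
  /-- the class `C_{w ≤ n}` -/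
  le : ℤ → Set C
  /-- the class `C_{w ≥ n}` -/
  ge : ℤ → Set C
  le_iso_closed : ∀ (n : ℤ) (X Y : C), (X ≅ Y) → X ∈ le n → Y ∈ le n
  ge_iso_closed : ∀ (n : ℤ) (X Y : C), (X ≅ Y) → X ∈ ge n → Y ∈ ge n
  le_retract : ∀ (n : ℤ) (X Y : C) (a : X ⟶ Y) (b : Y ⟶ X),
    a ≫ b = 𝟙 X → Y ∈ le n → X ∈ le n
  ge_retract : ∀ (n : ℤ) (X Y : C) (a : X ⟶ Y) (b : Y ⟶ X),
    a ≫ b = 𝟙 X → Y ∈ ge n → X ∈ ge n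
  le_shift : ∀ (n k : ℤ) (X : C), X ∈ le n → X⟦k⟧ ∈ le (n + k)
  ge_shift : ∀ (n k : ℤ) (X : C), X ∈ ge n → X⟦k⟧ ∈ ge (n + k)
  le_mono : ∀ n : ℤ, le n ⊆ le (n + 1)
  ge_anti : ∀ n : ℤ, ge (n + 1) ⊆ ge n
  orth : ∀ (n : ℤ) (X Y : C), X ∈ le n → Y ∈ ge (n + 1) → ∀ f : X ⟶ Y, f = 0
  decomp : ∀ (X : C) (k : ℤ), ∃ (A B : C) (x : A ⟶ X) (y : X ⟶ B) (δ : B ⟶ A⟦(1 : ℤ)⟧),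
    (Triangle.mk x y δ ∈ distTriang C) ∧ A ∈ le k ∧ B ∈ ge (k + 1)

variable {C}

/-- `(A, B, x, y)` is a `k`-weight decomposition of `X`. -/
def WeightStructure.IsWeightDecomp (w : WeightStructure C) (k : ℤ) {X : C} (A B : C)
    (x : A ⟶ X) (y : X ⟶ B) : Prop :=
  (∃ δ : B ⟶ A⟦(1 : ℤ)⟧, Triangle.mk x y δ ∈ distTriang C) ∧ A ∈ w.le k ∧ B ∈ w.ge (k + 1)

/-- `g : M ⟶ N` kills weights `m, …, n`. -/
def WeightStructure.KillsWeights (w : WeightStructure C) (m n : ℤ) {M N : C}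
    (g : M ⟶ N) : Prop :=
  ∃ (A A' B B' : C) (x : A ⟶ M) (x' : M ⟶ A') (y' : B ⟶ N) (y : N ⟶ B'),
    w.IsWeightDecomp n A A' x x' ∧ w.IsWeightDecomp (m - 1) B B' y' y ∧
      x ≫ g ≫ y = 0

/-- The class of objects of `C` without weights `m, …, n`. -/
def WeightStructure.without (w : WeightStructure C) (m n : ℤ) : Set C :=
  {M : C | w.KillsWeights m n (𝟙 M)}


/-- A `t`-structure on the triangulated category `C` (cohomological conventions,
with `le n = C_{t ≤ n}` and `ge n = C_{t ≥ n}`). -/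
structure TStructure (C : Type u) [Category.{v} C] [Preadditive C] [HasZeroObject C]
    [HasShift C ℤ] [∀ n : ℤ, (shiftFunctor C n).Additive] [Pretriangulated C] where
  le : ℤ → Set C
  ge : ℤ → Set C
  le_iso_closed : ∀ (n : ℤ) (X Y : C), (X ≅ Y) → X ∈ le n → Y ∈ le n
  ge_iso_closed : ∀ (n : ℤ) (X Y : C), (X ≅ Y) → X ∈ ge n → Y ∈ ge n
  le_shift : ∀ (n k : ℤ) (X : C), X ∈ le n → X⟦k⟧ ∈ le (n + k)
  ge_shift : ∀ (n k : ℤ) (X : C), X ∈ ge n → X⟦k⟧ ∈ ge (n + k)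
  le_mono : ∀ n : ℤ, le n ⊆ le (n + 1)
  ge_anti : ∀ n : ℤ, ge (n + 1) ⊆ ge n
  orth : ∀ (n : ℤ) (X Y : C), X ∈ ge (n + 1) → Y ∈ le n → ∀ f : X ⟶ Y, f = 0
  decomp : ∀ (X : C) (n : ℤ), ∃ (A B : C) (x : A ⟶ X) (y : X ⟶ B) (δ : B ⟶ A⟦(1 : ℤ)⟧),
    (Triangle.mk x y δ ∈ distTriang C) ∧ A ∈ ge (n + 1) ∧ B ∈ le n


lemma ge_eq_ge (w : WeightStructure C) (t : TStructure C) (adj : w.ge 0 = t.ge 0)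
    (k : ℤ) : w.ge k = t.ge k := by
  ext X
  constructor
  · intro hX
    have h1 : X⟦-k⟧ ∈ w.ge (k + -k) := w.ge_shift k (-k) X hX
    rw [add_neg_cancel, adj] at h1
    have h2 : (X⟦-k⟧)⟦k⟧ ∈ t.ge (0 + k) := t.ge_shift 0 k _ h1
    rw [zero_add] at h2
    exact t.ge_iso_closed k _ _ (shiftNegShift X k) h2
  · intro hX
    have h1 : X⟦-k⟧ ∈ t.ge (k + -k) := t.ge_shift k (-k) X hX
    rw [add_neg_cancel, ← adj] at h1
    have h2 : (X⟦-k⟧)⟦k⟧ ∈ w.ge (0 + k) := w.ge_shift 0 k _ h1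
    rw [zero_add] at h2
    exact w.ge_iso_closed k _ _ (shiftNegShift X k) h2

lemma tge_antitone (t : TStructure C) {a b : ℤ} (hab : a ≤ b) : t.ge b ⊆ t.ge a :=
  Int.le_induction (motive := fun b _ => t.ge b ⊆ t.ge a) subset_rfl
    (fun b _ ih => (t.ge_anti b).trans ih) b hab

lemma mem_ge_of_orth (w : WeightStructure C) (t : TStructure C) (adj : w.ge 0 = t.ge 0)
    (k : ℤ) (X : C) (hX : ∀ Y, Y ∈ t.le (k - 1) → ∀ f : X ⟶ Y, f = 0) :
    X ∈ t.ge k := by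
  obtain ⟨A, B, x, y, δ, hT, hA, hB⟩ := t.decomp X (k - 1)
  have hy : y = 0 := hX B hB y
  obtain ⟨s, hs⟩ := Triangle.coyoneda_exact₂ _ hT (𝟙 X) (by change 𝟙 X ≫ y = 0; rw [hy, comp_zero])
  have hA' : A ∈ w.ge k := by
    rw [ge_eq_ge w t adj]
    rwa [sub_add_cancel] at hA
  rw [← ge_eq_ge w t adj]
  exact w.ge_retract k X A s x hs.symm hA'

/-- If `t` is adjacent to `w`, the `C[m,n]`-conull morphisms are exactly the
morphisms killing weights `m, …, n`. -/
theorem stmt12 (w : WeightStructure C) (t : TStructure C)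
    (adj : w.ge 0 = t.ge 0) (m n : ℤ) (hmn : m ≤ n) {M N : C} (h : M ⟶ N) :
    (∀ I : C, I ∈ t.le n ∩ t.ge m → ∀ f : N ⟶ I, h ≫ f = 0) ↔
      w.KillsWeights m n h := by
  constructor
  · intro hconull
    obtain ⟨A, A', x, x', δ₁, hT₁, hAle, hA'ge⟩ := w.decomp M n
    obtain ⟨B, B', y', y, δ₂, hT₂, hBle, hB'ge⟩ := w.decomp N (m - 1)
    have hB'w : B' ∈ w.ge m := by rwa [sub_add_cancel] at hB'ge
    -- t-truncation of B'
    obtain ⟨A₀, I, u, v, δ₃, hT₃, hA₀ge, hIle⟩ := t.decomp B' n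
    -- I ∈ t.ge m
    have hIge : I ∈ t.ge m := by
      refine mem_ge_of_orth w t adj m I (fun Y hY f => ?_)
      have hvf : v ≫ f = 0 := by
        refine t.orth (m - 1) B' Y ?_ hY (v ≫ f)
        rw [sub_add_cancel, ← ge_eq_ge w t adj]
        exact hB'w
      obtain ⟨g, hg⟩ := Triangle.yoneda_exact₃ _ hT₃ f hvf
      have hg0 : g = 0 := by
        refine t.orth (m - 1) (A₀⟦(1 : ℤ)⟧) Y ?_ hY g
        rw [sub_add_cancel]
        refine tge_antitone t (by omega : m ≤ n + 1 + 1) ?_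
        exact t.ge_shift (n + 1) 1 A₀ hA₀ge
      rw [hg, hg0]; exact comp_zero
    -- apply conullity to y ≫ v
    have hzero : h ≫ y ≫ v = 0 := hconull I ⟨hIle, hIge⟩ (y ≫ v)
    -- c = x ≫ h ≫ y factors through A₀
    have hc : (x ≫ h ≫ y) ≫ v = 0 := by
      rw [Category.assoc, Category.assoc, hzero, comp_zero]
    obtain ⟨d, hd⟩ := Triangle.coyoneda_exact₂ _ hT₃ (x ≫ h ≫ y) hc
    have hd0 : d = 0 := by
      refine w.orth n A A₀ hAle ?_ d
      rw [ge_eq_ge w t adj]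
      exact hA₀ge
    refine ⟨A, A', B, B', x, x', y', y, ⟨⟨δ₁, hT₁⟩, hAle, hA'ge⟩,
      ⟨⟨δ₂, hT₂⟩, hBle, hB'ge⟩, ?_⟩
    exact hd.trans (by rw [hd0]; exact zero_comp)
  · rintro ⟨A, A', B, B', x, x', y', y, ⟨⟨δ₁, hT₁⟩, hAle, hA'ge⟩,
      ⟨⟨δ₂, hT₂⟩, hBle, hB'ge⟩, hzero⟩ I ⟨hIle, hIge⟩ f
    have hIw : I ∈ w.ge m := by rw [ge_eq_ge w t adj]; exact hIge
    have hy'f : y' ≫ f = 0 := by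
      refine w.orth (m - 1) B I hBle ?_ (y' ≫ f)
      rwa [sub_add_cancel]
    obtain ⟨fb, hfb⟩ := Triangle.yoneda_exact₂ _ hT₂ f hy'f
    have hx : x ≫ (h ≫ y ≫ fb) = 0 := by
      have e : x ≫ (h ≫ y ≫ fb) = (x ≫ h ≫ y) ≫ fb :=
        ((Category.assoc x (h ≫ y) fb).trans (congrArg (x ≫ ·) (Category.assoc h y fb))).symm
      rw [e, hzero]; exact zero_comp
    obtain ⟨g, hg⟩ := Triangle.yoneda_exact₂ _ hT₁ (h ≫ y ≫ fb) hx
    have hg0 : g = 0 := by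
      refine t.orth n A' I ?_ hIle g
      rw [← ge_eq_ge w t adj]
      exact hA'ge
    dsimp only [Triangle.mk] at hfb hg
    rw [hfb, hg, hg0]; exact comp_zero
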